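/- For all natural numbers n ≥ 1 and k ≥ 1, σ_k(B_n) ≤ B_{σ_k(n)}, with equality only if n = 1. Here σ_k(m) denotes the sum of the k-th powers of the divisors of m, and B is the balancing sequence. -/

import Mathlib

open ArithmeticFunction Finset

def B : ℕ → ℕ
  | 0 => 0
  | 1 => 1
  | (n + 2) => 6 * B (n + 1) - B n

lemma B_zero : B 0 = 0 := rfl
lemma B_one : B 1 = 1 := rfl
lemma B_succ_succ (n : ℕ) : B (n + 2) = 6 * B (n + 1) - B n := rfl

lemma B_lt_succ : ∀ n : ℕ, B n < B (n + 1) := by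
  have key : ∀ n : ℕ, B n < B (n + 1) ∧ B (n + 1) < B (n + 2) := by
    intro n
    induction n with
    | zero => constructor <;> simp [B]
    | succ m ih =>
      refine ⟨ih.2, ?_⟩
      show B (m + 2) < B (m + 3)
      have h1 : B (m + 1) ≤ B (m + 2) := le_of_lt ih.2
      have h2 : B (m + 3) = 6 * B (m + 2) - B (m + 1) := rfl
      have hpos : 0 < B (m + 2) := lt_of_le_of_lt (Nat.zero_le _) ih.2
      omega
  exact fun n => (key n).1

lemma B_mono : Monotone B := monotone_nat_of_le_succ fun n => (B_lt_succ n).le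

lemma B_strictMono : StrictMono B := strictMono_nat_of_lt_succ B_lt_succ

lemma B_pos (n : ℕ) (hn : 1 ≤ n) : 0 < B n := by
  have := B_strictMono.le_iff_le.mpr hn  -- maybe not; do directly
  calc 0 < B 1 := by simp [B]
  _ ≤ B n := B_mono hn

lemma B_add_eq (n : ℕ) : B (n + 2) + B n = 6 * B (n + 1) := by
  have h1 : B n < B (n + 1) := B_lt_succ n
  have h2 : B (n + 2) = 6 * B (n + 1) - B n := rfl
  omega

lemma B_five_mul (n : ℕ) : 5 * B (n + 1) ≤ B (n + 2) := by
  have h1 : B n < B (n + 1) := B_lt_succ n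
  have := B_add_eq n
  omega

lemma B_le_six_pow (n : ℕ) : B (n + 1) ≤ 6 ^ n := by
  induction n with
  | zero => simp [B]
  | succ m ih =>
    have h := B_add_eq m
    have : B (m + 2) ≤ 6 * B (m + 1) := by omega
    calc B (m + 2) ≤ 6 * B (m + 1) := this
    _ ≤ 6 * 6 ^ m := by omega
    _ = 6 ^ (m + 1) := by ring

lemma B_ge_five_pow (n : ℕ) : 5 ^ n ≤ B (n + 1) := by
  induction n with
  | zero => simp [B]
  | succ m ih =>
    calc 5 ^ (m + 1) = 5 * 5 ^ m := by ring
    _ ≤ 5 * B (m + 1) := by omega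
    _ ≤ B (m + 2) := B_five_mul m

lemma B_shift_pow (n t : ℕ) (hn : 1 ≤ n) : 5 ^ t * B n ≤ B (n + t) := by
  induction t with
  | zero => simp
  | succ m ih =>
    obtain ⟨n', rfl⟩ := Nat.exists_eq_add_of_le hn
    have h5 : 5 * B (1 + n' + m) ≤ B (1 + n' + m + 1) := by
      have := B_five_mul (n' + m)
      have e1 : 1 + n' + m = n' + m + 1 := by ring
      rw [e1]
      exact this
    calc 5 ^ (m + 1) * B (1 + n') = 5 * (5 ^ m * B (1 + n')) := by ring
    _ ≤ 5 * B (1 + n' + m) := by omega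
    _ ≤ B (1 + n' + m + 1) := h5

lemma B_parity (n : ℕ) : B n % 2 = n % 2 := by
  have key : ∀ n : ℕ, B n % 2 = n % 2 ∧ B (n + 1) % 2 = (n + 1) % 2 := by
    intro n
    induction n with
    | zero => simp [B]
    | succ m ih =>
      refine ⟨ih.2, ?_⟩
      show B (m + 2) % 2 = (m + 2) % 2
      have := B_add_eq m
      omega
  exact (key n).1

lemma card_divisors_le (m : ℕ) : m.divisors.card ≤ m := by
  have h : m.divisors ⊆ Finset.Icc 1 m := by
    intro d hd
    rw [Nat.mem_divisors] at hd
    have hd0 : 0 < d := by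
      rcases Nat.eq_zero_or_pos d with h0 | h0
      · subst h0; exact absurd (Nat.eq_zero_of_zero_dvd hd.1) hd.2
      · exact h0
    simp only [Finset.mem_Icc]
    exact ⟨hd0, Nat.le_of_dvd (Nat.pos_of_ne_zero hd.2) hd.1⟩
  calc m.divisors.card ≤ (Finset.Icc 1 m).card := Finset.card_le_card h
  _ = m := by simp

lemma sigma_upper (k m : ℕ) : sigma k m ≤ m ^ (k + 1) := by
  rw [sigma_apply]
  calc ∑ d ∈ m.divisors, d ^ k ≤ ∑ _d ∈ m.divisors, m ^ k := by
        apply Finset.sum_le_sum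
        intro d hd
        exact Nat.pow_le_pow_left (Nat.divisor_le hd) k
  _ = m.divisors.card * m ^ k := by rw [Finset.sum_const, smul_eq_mul]
  _ ≤ m * m ^ k := Nat.mul_le_mul_right _ (card_divisors_le m)
  _ = m ^ (k + 1) := by ring

lemma sigma_lower (k n : ℕ) (hn : 2 ≤ n) : n ^ k + 1 ≤ sigma k n := by
  rw [sigma_apply]
  have hsub : ({1, n} : Finset ℕ) ⊆ n.divisors := by
    intro d hd
    simp only [Finset.mem_insert, Finset.mem_singleton] at hd
    rw [Nat.mem_divisors]
    rcases hd with rfl | rfl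
    · exact ⟨one_dvd _, by omega⟩
    · exact ⟨dvd_rfl, by omega⟩
  calc n ^ k + 1 = ∑ d ∈ ({1, n} : Finset ℕ), d ^ k := by
        rw [Finset.sum_pair (by omega : (1:ℕ) ≠ n)]
        simp [add_comm]
  _ ≤ ∑ d ∈ n.divisors, d ^ k := Finset.sum_le_sum_of_subset hsub

lemma sigma_one_prime {p : ℕ} (hp : p.Prime) : sigma 1 p = p + 1 := by
  rw [sigma_one_apply, hp.divisors, Finset.sum_pair hp.one_lt.ne]
  omega

lemma sigma_one_composite (n : ℕ) (hn : 2 ≤ n) (hnp : ¬ n.Prime) :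
    n + Nat.sqrt n + 1 ≤ sigma 1 n := by
  set a := Nat.minFac n with ha
  set d := n / a with hd
  have hapos : 2 ≤ a := (Nat.minFac_prime (by omega)).two_le
  have hadvd : a ∣ n := Nat.minFac_dvd n
  have hsq : a * a ≤ n := by
    have := Nat.minFac_sq_le_self (by omega : 0 < n) hnp
    rw [pow_two] at this
    exact this
  have hddvd : d ∣ n := Nat.div_dvd_of_dvd hadvd
  have hsqrt_sq : Nat.sqrt n * Nat.sqrt n ≤ n := by
    have := Nat.sqrt_le' n
    rw [pow_two] at this
    exact this
  have hsqrtle : Nat.sqrt n ≤ d := by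
    rw [hd, Nat.le_div_iff_mul_le (by omega : 0 < a)]
    calc Nat.sqrt n * a ≤ Nat.sqrt n * Nat.sqrt n :=
          Nat.mul_le_mul_left _ (Nat.le_sqrt.mpr hsq)
    _ ≤ n := hsqrt_sq
  have hdlt : d < n := by
    rw [hd]
    exact Nat.div_lt_self (by omega) hapos
  have hsqrt2 : 2 ≤ Nat.sqrt n := by
    rw [Nat.le_sqrt]
    have h4 : 4 ≤ n := by
      by_contra hlt
      push_neg at hlt
      interval_cases n
      · exact hnp Nat.prime_two
      · exact hnp Nat.prime_three
    omega
  have hd1 : 1 < d := lt_of_lt_of_le (by omega) hsqrtle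
  have hsub : ({1, d, n} : Finset ℕ) ⊆ n.divisors := by
    intro x hx
    simp only [Finset.mem_insert, Finset.mem_singleton] at hx
    rw [Nat.mem_divisors]
    rcases hx with rfl | rfl | rfl
    · exact ⟨one_dvd _, by omega⟩
    · exact ⟨hddvd, by omega⟩
    · exact ⟨dvd_rfl, by omega⟩
  have hcard : ∑ x ∈ ({1, d, n} : Finset ℕ), x = 1 + d + n := by
    rw [Finset.sum_insert (by simp; omega), Finset.sum_pair (by omega : d ≠ n)]
    ring
  calc n + Nat.sqrt n + 1 ≤ 1 + d + n := by omega
  _ = ∑ x ∈ ({1, d, n} : Finset ℕ), x := hcard.symm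
  _ ≤ ∑ x ∈ n.divisors, x := Finset.sum_le_sum_of_subset hsub
  _ = sigma 1 n := (sigma_one_apply n).symm

def Hq (t : ℕ) : ℚ := ∑ i ∈ Finset.range t, ((i:ℚ)+1)⁻¹

lemma Hq_succ (t : ℕ) : Hq (t+1) = Hq t + ((t:ℚ)+1)⁻¹ := by
  rw [Hq, Hq, Finset.sum_range_succ]

lemma Hq_nonneg (t : ℕ) : 0 ≤ Hq t := by
  apply Finset.sum_nonneg
  intro i _
  positivity

lemma sum_inv_le_harmonic : ∀ (c : ℕ) (S : Finset ℕ), 0 ∉ S → S.card = c →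
    ∑ d ∈ S, ((d:ℚ))⁻¹ ≤ Hq c := by
  intro c
  induction c with
  | zero =>
    intro S h0 hc
    rw [Finset.card_eq_zero] at hc
    subst hc; simp [Hq]
  | succ c ih =>
    intro S h0 hc
    have hne : S.Nonempty := by
      rw [← Finset.card_pos, hc]; omega
    set M := S.max' hne with hM
    have hMmem : M ∈ S := S.max'_mem hne
    have hsub : S ⊆ Finset.Icc 1 M := by
      intro x hx
      simp only [Finset.mem_Icc]
      refine ⟨?_, S.le_max' x hx⟩
      rcases Nat.eq_zero_or_pos x with rfl | h
      · exact absurd hx h0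
      · exact h
    have hcardM : c + 1 ≤ M := by
      calc c + 1 = S.card := hc.symm
      _ ≤ (Finset.Icc 1 M).card := Finset.card_le_card hsub
      _ = M := by simp
    have herase : (S.erase M).card = c := by
      rw [Finset.card_erase_of_mem hMmem, hc]
      omega
    have h0' : 0 ∉ S.erase M := fun h => h0 (Finset.mem_of_mem_erase h)
    have hstep := ih (S.erase M) h0' herase
    have hsum : ∑ d ∈ S, ((d:ℚ))⁻¹ = (∑ d ∈ S.erase M, ((d:ℚ))⁻¹) + ((M:ℚ))⁻¹ := by
      rw [Finset.sum_erase_add S _ hMmem]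
    rw [hsum, Hq_succ]
    have hMQ : ((M:ℚ))⁻¹ ≤ ((c:ℚ)+1)⁻¹ := by
      apply inv_anti₀
      · positivity
      · exact_mod_cast hcardM
    linarith

lemma harmonic_two_pow : ∀ j : ℕ, Hq (2^j) ≤ j + 1 := by
  intro j
  induction j with
  | zero => simp [Hq]
  | succ j ih =>
    have hle : (2:ℕ)^j ≤ 2^(j+1) := Nat.pow_le_pow_right (by norm_num) (by omega)
    have hsplit : Hq (2^(j+1))
        = Hq (2^j) + ∑ i ∈ Finset.Ico (2^j : ℕ) (2^(j+1)), ((i:ℚ)+1)⁻¹ := by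
      rw [Hq, Hq, Finset.range_eq_Ico,
        ← Finset.sum_Ico_consecutive _ (Nat.zero_le _) hle, Finset.range_eq_Ico]
    have hbound : ∑ i ∈ Finset.Ico (2^j : ℕ) (2^(j+1)), ((i:ℚ)+1)⁻¹ ≤ 1 := by
      have h1 : ∀ i ∈ Finset.Ico (2^j : ℕ) (2^(j+1)), ((i:ℚ)+1)⁻¹ ≤ ((2:ℚ)^j)⁻¹ := by
        intro i hi
        rw [Finset.mem_Ico] at hi
        apply inv_anti₀
        · positivity
        · have : ((2:ℚ))^j ≤ i := by exact_mod_cast hi.1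
          linarith
      calc ∑ i ∈ Finset.Ico (2^j : ℕ) (2^(j+1)), ((i:ℚ)+1)⁻¹
          ≤ (Finset.Ico (2^j : ℕ) (2^(j+1))).card • (((2:ℚ)^j)⁻¹) := Finset.sum_le_card_nsmul _ _ _ h1
      _ = (2^j : ℕ) • (((2:ℚ)^j)⁻¹) := by
          rw [Nat.card_Ico]
          congr 1
          omega
      _ = 1 := by
          rw [nsmul_eq_mul]
          push_cast
          field_simp
    rw [hsplit]
    push_cast
    linarith

lemma harmonic_mono {t t' : ℕ} (h : t ≤ t') : Hq t ≤ Hq t' := by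
  apply Finset.sum_le_sum_of_subset_of_nonneg (Finset.range_subset_range.mpr h)
  intro i _ _
  positivity

lemma sigma_one_le_mul_harmonic (m : ℕ) (hm : 1 ≤ m) :
    (sigma 1 m : ℚ) ≤ m * Hq (m.divisors.card) := by
  have hdiv : sigma 1 m = ∑ d ∈ m.divisors, m / d := by
    rw [sigma_one_apply]
    exact (Nat.sum_div_divisors m _root_.id).symm
  have hcast : (sigma 1 m : ℚ) = ∑ d ∈ m.divisors, (m:ℚ)/d := by
    rw [hdiv]
    push_cast
    apply Finset.sum_congr rfl
    intro d hd
    rw [Nat.mem_divisors] at hd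
    rw [Nat.cast_div hd.1]
    intro h
    have : d = 0 := by exact_mod_cast h
    subst this
    exact hd.2 (Nat.eq_zero_of_zero_dvd hd.1)
  rw [hcast]
  have heq : ∑ d ∈ m.divisors, (m:ℚ)/d = m * ∑ d ∈ m.divisors, ((d:ℚ))⁻¹ := by
    rw [Finset.mul_sum]
    apply Finset.sum_congr rfl
    intro d _
    rw [div_eq_mul_inv]
  rw [heq]
  have h0 : 0 ∉ m.divisors := by simp [Nat.mem_divisors]
  have hkey := sum_inv_le_harmonic m.divisors.card m.divisors h0 rfl
  have hm0 : (0:ℚ) ≤ m := by positivity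
  exact mul_le_mul_of_nonneg_left hkey hm0

lemma geom_mul (q i : ℕ) (hq : 1 ≤ q) :
    (∑ j ∈ Finset.range (i+1), q^j) * (q-1) + 1 = q^(i+1) := by
  induction i with
  | zero => simp; omega
  | succ i ih =>
    rw [Finset.sum_range_succ, add_mul]
    have hpow : q^(i+1) * (q-1) + q^(i+1) = q^(i+2) := by
      obtain ⟨q', rfl⟩ : ∃ q', q = q' + 1 := ⟨q-1, by omega⟩
      simp only [Nat.add_sub_cancel]
      ring
    have he : q^(i+1+1) = q^(i+2) := by ring
    omega

lemma sigma_pp_bound {q : ℕ} (hq : q.Prime) (i : ℕ) :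
    ArithmeticFunction.sigma 1 (q^i) * (q-1) ≤ q^(i+1) := by
  rw [sigma_one_apply_prime_pow hq]
  have := geom_mul q i hq.one_lt.le
  omega

lemma sigma_radical_bound (m : ℕ) (hm : m ≠ 0) :
    ArithmeticFunction.sigma 1 m * ∏ q ∈ m.primeFactors, (q-1)
      ≤ m * ∏ q ∈ m.primeFactors, q := by
  have hσ : ArithmeticFunction.sigma 1 m
      = ∏ q ∈ m.primeFactors, ArithmeticFunction.sigma 1 (q ^ m.factorization q) := by
    rw [ArithmeticFunction.IsMultiplicative.multiplicative_factorization (sigma 1) isMultiplicative_sigma hm]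
    rw [Finsupp.prod]
    rw [Nat.support_factorization]
  have hm' : m = ∏ q ∈ m.primeFactors, q ^ m.factorization q := by
    conv_lhs => rw [← Nat.factorization_prod_pow_eq_self hm]
    rw [Finsupp.prod, Nat.support_factorization]
  calc ArithmeticFunction.sigma 1 m * ∏ q ∈ m.primeFactors, (q-1)
      = ∏ q ∈ m.primeFactors, (ArithmeticFunction.sigma 1 (q ^ m.factorization q) * (q-1)) := by
        rw [hσ, Finset.prod_mul_distrib]
  _ ≤ ∏ q ∈ m.primeFactors, q ^ (m.factorization q + 1) := by
        apply Finset.prod_le_prod'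
        intro q hq
        exact sigma_pp_bound (Nat.prime_of_mem_primeFactors hq) _
  _ = (∏ q ∈ m.primeFactors, q ^ m.factorization q) * ∏ q ∈ m.primeFactors, q := by
        rw [← Finset.prod_mul_distrib]
        apply Finset.prod_congr rfl
        intro q _
        rw [pow_succ]
  _ = m * ∏ q ∈ m.primeFactors, q := by rw [← hm']

section FieldPart

lemma B_cast_identity {K : Type} [Field K] (α : K) (hα : α^2 + 1 = 6*α) :
    ∀ n : ℕ, ((B n : ℕ) : K) * (α - (6 - α)) = α^n - (6 - α)^n := by
  set β : K := 6 - α with hβdef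
  have hβ : β^2 + 1 = 6*β := by
    rw [hβdef]
    linear_combination hα
  have key : ∀ n : ℕ, ((B n : ℕ) : K) * (α - β) = α^n - β^n ∧
      ((B (n+1) : ℕ) : K) * (α - β) = α^(n+1) - β^(n+1) := by
    intro n
    induction n with
    | zero => constructor <;> simp [B]
    | succ m ih =>
      refine ⟨ih.2, ?_⟩
      have hcast : ((B (m+2) : ℕ) : K) + ((B m : ℕ) : K) = 6 * ((B (m+1) : ℕ) : K) := by
        have := B_add_eq m
        exact_mod_cast congrArg (fun x : ℕ => (x : K)) this
      have ih1 := ih.1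
      have ih2 := ih.2
      show ((B (m+2) : ℕ) : K) * (α - β) = α^(m+2) - β^(m+2)
      have hB2 : ((B (m+2) : ℕ) : K) = 6 * ((B (m+1) : ℕ) : K) - ((B m : ℕ) : K) := by
        linear_combination hcast
      rw [hB2]
      linear_combination 6 * ih2 - ih1 - α^m * hα + β^m * hβ
  exact fun n => (key n).1

lemma key_div {K : Type} [Field K] {q p : ℕ} (hq : q.Prime) (hq2 : q ≠ 2) [CharP K q]
    (hp : p.Prime) (hp2 : p ≠ 2)
    (α : K) (hα : α^2 + 1 = 6*α)
    (hfrob : α^(q-1) = 1 ∨ α^(q+1) = 1)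
    (hB : ((B p : ℕ) : K) = 0) :
    p ∣ q - 1 ∨ p ∣ q + 1 := by
  have hα0 : α ≠ 0 := by
    intro h
    rw [h] at hα
    simp at hα
  set β : K := 6 - α with hβdef
  have hαβ : α * β = 1 := by
    rw [hβdef]
    linear_combination (-1 : K) * hα
  have hid := B_cast_identity α hα p
  rw [hB, zero_mul] at hid
  have hpow : α^p = β^p := by
    show α^p = (6 - α)^p
    linear_combination -hid
  have h2p : α^(2*p) = 1 := by
    have h1 : α^p * β^p = 1 := by rw [← mul_pow, hαβ, one_pow]
    have : α^p * α^p = 1 := by rw [hpow] at h1 ⊢; exact h1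
    calc α^(2*p) = α^p * α^p := by rw [two_mul, pow_add]
    _ = 1 := this
  set u : Kˣ := Units.mk0 α hα0 with hu
  have huval : (u : K) = α := rfl
  have hu2p : u^(2*p) = 1 := by
    ext
    push_cast [huval]
    exact h2p
  have hord2p : orderOf u ∣ 2 * p := orderOf_dvd_of_pow_eq_one hu2p
  have hordn2 : ¬ (orderOf u ∣ 2) := by
    intro h
    have hu2 : u^2 = 1 := orderOf_dvd_iff_pow_eq_one.mp h
    have hα2 : α^2 = 1 := by
      have := congrArg (Units.val) hu2
      push_cast [huval] at this
      exact this
    have : (α - 1) * (α + 1) = 0 := by linear_combination hα2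
    rcases mul_eq_zero.mp this with h1 | h1
    · have hα1 : α = 1 := by linear_combination h1
      rw [hα1] at hα
      have h4 : ((4 : ℕ) : K) = 0 := by push_cast; linear_combination -hα
      have hdvd := (CharP.cast_eq_zero_iff K q 4).mp h4
      have : q ∣ 2 := hq.dvd_of_dvd_pow (show q ∣ 2^2 by norm_num; exact hdvd)
      exact hq2 ((Nat.prime_dvd_prime_iff_eq hq Nat.prime_two).mp this)
    · have hα1 : α = -1 := by linear_combination h1
      rw [hα1] at hα
      have h8 : ((8 : ℕ) : K) = 0 := by push_cast; linear_combination hα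
      have hdvd := (CharP.cast_eq_zero_iff K q 8).mp h8
      have : q ∣ 2 := hq.dvd_of_dvd_pow (show q ∣ 2^3 by norm_num; exact hdvd)
      exact hq2 ((Nat.prime_dvd_prime_iff_eq hq Nat.prime_two).mp this)
  have hpord : p ∣ orderOf u := by
    by_contra hpd
    have hcop : Nat.Coprime (orderOf u) p := ((hp.coprime_iff_not_dvd).mpr hpd).symm
    have : orderOf u ∣ 2 := hcop.dvd_of_dvd_mul_right hord2p
    exact hordn2 this
  rcases hfrob with h | h
  · left
    have : u^(q-1) = 1 := by ext; push_cast [huval]; exact h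
    exact dvd_trans hpord (orderOf_dvd_of_pow_eq_one this)
  · right
    have : u^(q+1) = 1 := by ext; push_cast [huval]; exact h
    exact dvd_trans hpord (orderOf_dvd_of_pow_eq_one this)

end FieldPart

lemma frob_conclusion {q p : ℕ} (hq : q.Prime) (hq2 : q ≠ 2) (hp : p.Prime) (hp2 : p ≠ 2)
    (hdvd : q ∣ B p) : p ∣ q - 1 ∨ p ∣ q + 1 := by
  haveI : Fact q.Prime := ⟨hq⟩
  have hq2le := hq.two_le
  by_cases hroot : ∃ x : ZMod q, x^2 + 1 = 6*x
  · obtain ⟨α, hα⟩ := hroot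
    have hB : ((B p : ℕ) : ZMod q) = 0 := (ZMod.natCast_eq_zero_iff _ _).mpr hdvd
    have hα0 : α ≠ 0 := by
      intro h
      rw [h] at hα
      simp at hα
    have hfrob : α^(q-1) = 1 := by
      have hq1 : α^q = α := ZMod.pow_card α
      have he : q - 1 + 1 = q := by omega
      have h2 : α^(q-1) * α = 1 * α := by
        rw [← pow_succ, he, hq1, one_mul]
      exact mul_right_cancel₀ hα0 h2
    exact key_div hq hq2 hp hp2 α hα (Or.inl hfrob) hB
  · push_neg at hroot
    set f : Polynomial (ZMod q) := Polynomial.X^2 - Polynomial.C 6 * Polynomial.X + Polynomial.C 1 with hf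
    have hmonic : f.Monic := by
      rw [hf]
      monicity!
    have hdeg : f.natDegree = 2 := by
      rw [hf]
      compute_degree!
    have hirr : Irreducible f := by
      rw [Polynomial.irreducible_iff_roots_eq_zero_of_degree_le_three (by omega) (by omega)]
      rw [Multiset.eq_zero_iff_forall_notMem]
      intro x hx
      have hf0 : f ≠ 0 := hmonic.ne_zero
      rw [Polynomial.mem_roots hf0, Polynomial.IsRoot, hf] at hx
      simp only [Polynomial.eval_add, Polynomial.eval_sub, Polynomial.eval_mul,
        Polynomial.eval_pow, Polynomial.eval_X, Polynomial.eval_C] at hx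
      exact hroot x (by linear_combination hx)
    haveI : Fact (Irreducible f) := ⟨hirr⟩
    set K := AdjoinRoot f with hK
    haveI : CharP K q := by
      have hinj : Function.Injective (algebraMap (ZMod q) K) := (algebraMap (ZMod q) K).injective
      exact charP_of_injective_algebraMap hinj q
    set α : K := AdjoinRoot.root f with hαdef
    have hα : α^2 + 1 = 6*α := by
      have := AdjoinRoot.eval₂_root f
      rw [hf] at this
      simp only [Polynomial.eval₂_add, Polynomial.eval₂_sub, Polynomial.eval₂_mul,
        Polynomial.eval₂_pow, Polynomial.eval₂_X, Polynomial.eval₂_C, Polynomial.eval₂_ofNat,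
        Polynomial.eval₂_one, map_one, map_ofNat] at this
      linear_combination this
    have hB : ((B p : ℕ) : K) = 0 := (CharP.cast_eq_zero_iff K q (B p)).mpr hdvd
    have hα0 : α ≠ 0 := by
      intro h
      rw [h] at hα
      simp at hα
    -- Frobenius
    have hγ : (α^q)^2 + 1 = 6*(α^q) := by
      have hcong := congrArg (fun x : K => x^q) hα
      rw [add_pow_char, mul_pow, one_pow] at hcong
      have h6 : (6:K)^q = 6 := by
        have := map_natCast (frobenius K q) 6
        rw [frobenius_def] at this
        push_cast at this
        exact this
      rw [h6] at hcong
      calc (α^q)^2 + 1 = (α^2)^q + 1 := by rw [← pow_mul, ← pow_mul, mul_comm]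
      _ = 6 * α^q := hcong
    have hsplit : (α^q - α) * (α^q - (6 - α)) = 0 := by
      linear_combination hγ - hα
    have hfrob : α^(q-1) = 1 ∨ α^(q+1) = 1 := by
      rcases mul_eq_zero.mp hsplit with h | h
      · left
        have hq1 : α^q = α := by linear_combination h
        have he : q - 1 + 1 = q := by omega
        have h2 : α^(q-1) * α = 1 * α := by
          rw [← pow_succ, he, hq1, one_mul]
        exact mul_right_cancel₀ hα0 h2
      · right
        have hq1 : α^q = 6 - α := by linear_combination h
        calc α^(q+1) = α^q * α := by rw [pow_succ]
        _ = (6 - α) * α := by rw [hq1]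
        _ = 1 := by linear_combination -hα
    exact key_div hq hq2 hp hp2 α hα hfrob hB

lemma pow_aux : ∀ (n m : ℕ), (m+1)^n * (m - n) ≤ m^(n+1) := by
  intro n
  induction n with
  | zero => intro m; simpa using le_refl m
  | succ n ih =>
    intro m
    have hstep : (m+1) * (m - (n+1)) ≤ m * (m - n) := by
      rcases le_or_gt (n+1) m with h | h
      · obtain ⟨c, rfl⟩ : ∃ c, m = n + 1 + c := ⟨m - (n+1), by omega⟩
        have h1 : n + 1 + c - (n+1) = c := by omega
        have h2 : n + 1 + c - n = c + 1 := by omega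
        rw [h1, h2]
        nlinarith
      · have h1 : m - (n+1) = 0 := by omega
        rw [h1]
        simp
    calc (m+1)^(n+1) * (m - (n+1)) = (m+1)^n * ((m+1) * (m - (n+1))) := by ring
    _ ≤ (m+1)^n * (m * (m - n)) := Nat.mul_le_mul_left _ hstep
    _ = m * ((m+1)^n * (m - n)) := by ring
    _ ≤ m * m^(n+1) := Nat.mul_le_mul_left _ (ih m)
    _ = m^(n+2) := by ring

lemma B_prime_factor_lower {p q : ℕ} (hp : p.Prime) (hp5 : 5 ≤ p) (hq : q.Prime)
    (hdvd : q ∣ B p) : 2 * p - 1 ≤ q := by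
  have hp2 : p ≠ 2 := by omega
  have hpodd : p % 2 = 1 := by
    rcases Nat.Prime.eq_two_or_odd hp with h | h
    · omega
    · exact h
  have hq2 : q ≠ 2 := by
    rintro rfl
    have hpar := B_parity p
    have hBeven : B p % 2 = 0 := Nat.eq_zero_of_dvd_of_lt hdvd |> fun _ => by omega
    omega
  have hdiv := frob_conclusion hq hq2 hp hp2 hdvd
  have hq2le := hq.two_le
  have hqodd : q % 2 = 1 := by
    rcases Nat.Prime.eq_two_or_odd hq with h | h
    · exact absurd h hq2
    · exact h
  rcases hdiv with h | h
  · obtain ⟨t, ht⟩ := h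
    have ht0 : t ≠ 0 := by rintro rfl; omega
    have hteven : t % 2 = 0 := by
      rcases Nat.even_or_odd t with he | ho
      · exact Nat.even_iff.mp he
      · exfalso
        have hodd : Odd (p * t) := Odd.mul (Nat.odd_iff.mpr hpodd) ho
        rw [← ht] at hodd
        rw [Nat.odd_iff] at hodd
        omega
    have ht2 : 2 ≤ t := by omega
    have : 2 * p ≤ p * t := by
      calc 2 * p = p * 2 := by ring
      _ ≤ p * t := Nat.mul_le_mul_left _ ht2
    omega
  · obtain ⟨t, ht⟩ := h
    have ht0 : t ≠ 0 := by rintro rfl; omega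
    have hteven : t % 2 = 0 := by
      rcases Nat.even_or_odd t with he | ho
      · exact Nat.even_iff.mp he
      · exfalso
        have hodd : Odd (p * t) := Odd.mul (Nat.odd_iff.mpr hpodd) ho
        rw [← ht] at hodd
        rw [Nat.odd_iff] at hodd
        omega
    have ht2 : 2 ≤ t := by omega
    have : 2 * p ≤ p * t := by
      calc 2 * p = p * 2 := by ring
      _ ≤ p * t := Nat.mul_le_mul_left _ ht2
    omega

lemma sigma_B_prime_le {p : ℕ} (hp : p.Prime) (hp5 : 5 ≤ p) :
    ArithmeticFunction.sigma 1 (B p) ≤ 2 * B p := by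
  set m := B p with hm
  have hm1 : 1 ≤ m := B_pos p (by omega)
  have hm6 : m ≤ 6^(p-1) := by
    have := B_le_six_pow (p-1)
    have he : p - 1 + 1 = p := by omega
    rw [he] at this
    exact this
  set pf := m.primeFactors with hpf
  have hqlow : ∀ q ∈ pf, 2*p - 1 ≤ q := by
    intro q hqmem
    exact B_prime_factor_lower hp hp5 (Nat.prime_of_mem_primeFactors hqmem)
      (Nat.dvd_of_mem_primeFactors hqmem)
  set w := pf.card with hw
  have hrad : (2*p-1)^w ≤ m := by
    calc (2*p-1)^w = ∏ _q ∈ pf, (2*p-1) := by rw [Finset.prod_const]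
    _ ≤ ∏ q ∈ pf, q := Finset.prod_le_prod' hqlow
    _ ≤ m := Nat.le_of_dvd (by omega) (Nat.prod_primeFactors_dvd m)
  have hwle : w ≤ p - 2 := by
    by_contra hcon
    push_neg at hcon
    have h1 : p - 1 ≤ w := by omega
    have h2 : (2*p-1)^(p-1) ≤ (2*p-1)^w := Nat.pow_le_pow_right (by omega) h1
    have h3 : 6^(p-1) < (2*p-1)^(p-1) := by
      apply Nat.pow_lt_pow_left (by omega)
      omega
    omega
  -- (2p-1)^w ≤ 2 * (2p-2)^w
  have hZ2Y : (2*p-1)^w ≤ 2 * (2*p-2)^w := by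
    have haux := pow_aux w (2*p-2)
    have he : 2*p-2+1 = 2*p-1 := by omega
    rw [he] at haux
    have hple : p ≤ 2*p-2-w := by omega
    have h1 : (2*p-1)^w * p ≤ (2*p-1)^w * (2*p-2-w) := Nat.mul_le_mul_left _ hple
    have h2 : (2*p-2)^(w+1) = (2*p-2)^w * (2*p-2) := by ring
    have h3 : (2*p-1)^w * p ≤ (2*p-2)^w * (2*p-2) := by omega
    have h4 : (2*p-2)^w * (2*p-2) ≤ (2*p-2)^w * (2*p) := Nat.mul_le_mul_left _ (by omega)
    have h5 : p * (2*p-1)^w ≤ p * (2 * (2*p-2)^w) := by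
      calc p * (2*p-1)^w = (2*p-1)^w * p := by ring
      _ ≤ (2*p-2)^w * (2*p) := by omega
      _ = p * (2 * (2*p-2)^w) := by ring
    exact Nat.le_of_mul_le_mul_left h5 (by omega)
  have hPY : (∏ q ∈ pf, q) * (2*p-2)^w ≤ (∏ q ∈ pf, (q-1)) * (2*p-1)^w := by
    calc (∏ q ∈ pf, q) * (2*p-2)^w = ∏ q ∈ pf, (q * (2*p-2)) := by
          rw [Finset.prod_mul_distrib, Finset.prod_const]
    _ ≤ ∏ q ∈ pf, ((q-1) * (2*p-1)) := by
          apply Finset.prod_le_prod'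
          intro q hqmem
          have hql := hqlow q hqmem
          obtain ⟨r, rfl⟩ : ∃ r, q = r + 1 := ⟨q - 1, by omega⟩
          have hr : 2*p-2 ≤ r := by omega
          have h1 : (r+1) * (2*p-2) = r * (2*p-2) + (2*p-2) := by ring
          have h2 : (r+1) - 1 = r := by omega
          rw [h1, h2]
          have h3 : r * (2*p-1) = r * (2*p-2) + r := by
            have : 2*p-1 = (2*p-2) + 1 := by omega
            rw [this]
            ring
          omega
    _ = (∏ q ∈ pf, (q-1)) * (2*p-1)^w := by
          rw [Finset.prod_mul_distrib, Finset.prod_const]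
  have hX0 : 0 < ∏ q ∈ pf, (q-1) := by
    apply Finset.prod_pos
    intro q hqmem
    have := hqlow q hqmem
    omega
  have hY0 : 0 < (2*p-2)^w := Nat.pow_pos (by omega)
  have hmain := sigma_radical_bound m (by omega)
  -- σ m * X ≤ m * P
  have hchain : ArithmeticFunction.sigma 1 m * ((∏ q ∈ pf, (q-1)) * (2*p-2)^w)
      ≤ 2 * m * ((∏ q ∈ pf, (q-1)) * (2*p-2)^w) := by
    calc ArithmeticFunction.sigma 1 m * ((∏ q ∈ pf, (q-1)) * (2*p-2)^w)
        = (ArithmeticFunction.sigma 1 m * (∏ q ∈ pf, (q-1))) * (2*p-2)^w := by ring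
    _ ≤ (m * ∏ q ∈ pf, q) * (2*p-2)^w := Nat.mul_le_mul_right _ hmain
    _ = m * ((∏ q ∈ pf, q) * (2*p-2)^w) := by ring
    _ ≤ m * ((∏ q ∈ pf, (q-1)) * (2*p-1)^w) := Nat.mul_le_mul_left _ hPY
    _ ≤ m * ((∏ q ∈ pf, (q-1)) * (2 * (2*p-2)^w)) := by
          apply Nat.mul_le_mul_left
          apply Nat.mul_le_mul_left
          exact hZ2Y
    _ = 2 * m * ((∏ q ∈ pf, (q-1)) * (2*p-2)^w) := by ring
  exact Nat.le_of_mul_le_mul_right hchain (by positivity)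

lemma exp_ineq : ∀ (k n : ℕ), 2 ≤ n → 2 ≤ k → 8*((n-1)*(k+1)) ≤ 7*n^k := by
  intro k
  induction k with
  | zero => intro n _ hk; omega
  | succ k ih =>
    intro n hn hk
    rcases Nat.lt_or_ge k 2 with hk2 | hk2
    · -- k+1 = 2, so k = 1
      have hk1 : k = 1 := by omega
      subst hk1
      have h1 : 4*(n-1) ≤ n^2 := by
        obtain ⟨c, rfl⟩ : ∃ c, n = c + 2 := ⟨n - 2, by omega⟩
        have : (c+2)^2 = c^2 + 4*c + 4 := by ring
        omega
      calc 8*((n-1)*(2+1)) = 6*(4*(n-1)) := by ring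
      _ ≤ 7*(4*(n-1)) := by omega
      _ ≤ 7*n^2 := by omega
    · have hrec := ih n hn hk2
      have hpow : n^(k+1) = n * n^k := by ring
      calc 8*((n-1)*(k+1+1)) ≤ 2*(8*((n-1)*(k+1))) := by nlinarith
      _ ≤ 2*(7*n^k) := by omega
      _ ≤ n*(7*n^k) := Nat.mul_le_mul_right _ (by omega)
      _ = 7*n^(k+1) := by rw [hpow]; ring

lemma six_lt_five_pow {n k : ℕ} (hn : 2 ≤ n) (hk : 2 ≤ k) :
    6^((n-1)*(k+1)) < 5^(n^k) := by
  have hb : 1 ≤ (n-1)*(k+1) := by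
    have : 1 ≤ n - 1 := by omega
    have : 3 ≤ k + 1 := by omega
    nlinarith
  have h7 : (6^((n-1)*(k+1)))^7 < (5^(n^k))^7 := by
    have h1 : (6^((n-1)*(k+1)))^7 = (6^7)^((n-1)*(k+1)) := by
      rw [← pow_mul, ← pow_mul, mul_comm]
    have h2 : (6^7 : ℕ)^((n-1)*(k+1)) < (5^8 : ℕ)^((n-1)*(k+1)) := by
      apply Nat.pow_lt_pow_left (by norm_num)
      omega
    have h3 : (5^8 : ℕ)^((n-1)*(k+1)) = 5^(8*((n-1)*(k+1))) := by
      rw [← pow_mul]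
    have h4 : (5:ℕ)^(8*((n-1)*(k+1))) ≤ 5^(7*n^k) :=
      Nat.pow_le_pow_right (by norm_num) (exp_ineq k n hn hk)
    have h5 : (5:ℕ)^(7*n^k) = (5^(n^k))^7 := by
      rw [← pow_mul, mul_comm]
    omega
  exact lt_of_pow_lt_pow_left₀ 7 (Nat.zero_le _) h7

lemma case_k_ge_two {n k : ℕ} (hn : 2 ≤ n) (hk : 2 ≤ k) :
    ArithmeticFunction.sigma k (B n) < B (ArithmeticFunction.sigma k n) := by
  have hB1 : 1 ≤ B n := B_pos n (by omega)
  have hB6 : B n ≤ 6^(n-1) := by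
    have := B_le_six_pow (n-1)
    have he : n - 1 + 1 = n := by omega
    rwa [he] at this
  calc ArithmeticFunction.sigma k (B n) ≤ (B n)^(k+1) := sigma_upper k (B n)
  _ ≤ (6^(n-1))^(k+1) := Nat.pow_le_pow_left hB6 _
  _ = 6^((n-1)*(k+1)) := by rw [← pow_mul]
  _ < 5^(n^k) := six_lt_five_pow hn hk
  _ ≤ B (n^k + 1) := B_ge_five_pow (n^k)
  _ ≤ B (ArithmeticFunction.sigma k n) := B_mono (sigma_lower k n hn)

lemma sqrt_pow_ineq (s : ℕ) (hs : 1 ≤ s) : 3*(s+1)^2 ≤ 5^(s+1) := by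
  obtain ⟨t, rfl⟩ : ∃ t, s = t + 1 := ⟨s - 1, by omega⟩
  clear hs
  induction t with
  | zero => norm_num
  | succ t ih =>
    have h1 : 3*(t+1+1+1)^2 ≤ 5*(3*(t+1+1)^2) := by
      have e1 : (t+1+1+1)^2 = t*t + 6*t + 9 := by ring
      have e2 : (t+1+1)^2 = t*t + 4*t + 4 := by ring
      rw [e1, e2]
      omega
    calc 3*(t+1+1+1)^2 ≤ 5*(3*(t+1+1)^2) := h1
    _ ≤ 5*5^(t+1+1) := by omega
    _ = 5^(t+1+1+1) := by ring

lemma case_composite {n : ℕ} (hn : 2 ≤ n) (hnp : ¬ n.Prime) :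
    ArithmeticFunction.sigma 1 (B n) < B (ArithmeticFunction.sigma 1 n) := by
  have hn4 : 4 ≤ n := by
    by_contra h
    push_neg at h
    interval_cases n
    · exact hnp Nat.prime_two
    · exact hnp Nat.prime_three
  set m := B n with hm
  have hm1 : 1 ≤ m := B_pos n (by omega)
  have hm6 : m ≤ 6^(n-1) := by
    have := B_le_six_pow (n-1)
    have he : n - 1 + 1 = n := by omega
    rwa [he] at this
  -- τ(m) ≤ 2^(3*(n-1))
  have hτ : m.divisors.card ≤ 2^(3*(n-1)) := by
    calc m.divisors.card ≤ m := card_divisors_le m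
    _ ≤ 6^(n-1) := hm6
    _ ≤ 8^(n-1) := Nat.pow_le_pow_left (by norm_num) _
    _ = 2^(3*(n-1)) := by rw [pow_mul]; norm_num
  -- σ(m) ≤ (3n-2)·m over ℚ
  have hH : Hq (m.divisors.card) ≤ (3*(n-1) : ℕ) + 1 := by
    calc Hq (m.divisors.card) ≤ Hq (2^(3*(n-1))) := harmonic_mono hτ
    _ ≤ (3*(n-1) : ℕ) + 1 := harmonic_two_pow (3*(n-1))
  have hQB : (ArithmeticFunction.sigma 1 m : ℚ) ≤ (m * (3*(n-1) + 1) : ℕ) := by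
    have h1 := sigma_one_le_mul_harmonic m hm1
    have h2 : (m:ℚ) * Hq (m.divisors.card) ≤ (m:ℚ) * ((3*(n-1) : ℕ) + 1) := by
      apply mul_le_mul_of_nonneg_left hH
      positivity
    push_cast
    push_cast at h1 h2
    linarith
  have hNB : ArithmeticFunction.sigma 1 m ≤ m * (3*(n-1) + 1) := by exact_mod_cast hQB
  set s := Nat.sqrt n with hs
  have hs1 : 2 ≤ s := by
    rw [hs, Nat.le_sqrt]
    omega
  have hnlt : n < (s+1)*(s+1) := Nat.lt_succ_sqrt n
  have hineq : 3*(n-1) + 1 < 5^(s+1) := by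
    have h1 := sqrt_pow_ineq s (by omega)
    have h2 : (s+1)^2 = (s+1)*(s+1) := by ring
    rw [h2] at h1
    omega
  have hσn : n + s + 1 ≤ ArithmeticFunction.sigma 1 n := by
    have := sigma_one_composite n (by omega) hnp
    omega
  calc ArithmeticFunction.sigma 1 m ≤ m * (3*(n-1) + 1) := hNB
  _ < m * 5^(s+1) := mul_lt_mul_of_pos_left hineq (by omega)
  _ = 5^(s+1) * B n := by rw [hm]; ring
  _ ≤ B (n + (s+1)) := B_shift_pow n (s+1) (by omega)
  _ ≤ B (ArithmeticFunction.sigma 1 n) := B_mono (by omega)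

lemma case_prime {p : ℕ} (hp : p.Prime) :
    ArithmeticFunction.sigma 1 (B p) < B (ArithmeticFunction.sigma 1 p) := by
  rw [sigma_one_prime hp]
  rcases Nat.lt_or_ge p 5 with hp5 | hp5
  · interval_cases p
    · exact absurd hp (by norm_num)
    · exact absurd hp (by norm_num)
    · -- p = 2
      show ArithmeticFunction.sigma 1 (B 2) < B 3
      have hB2 : B 2 = 6 := rfl
      have hB3 : B 3 = 35 := rfl
      rw [hB2, hB3, sigma_one_apply]
      decide
    · -- p = 3
      show ArithmeticFunction.sigma 1 (B 3) < B 4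
      have hB3 : B 3 = 35 := rfl
      have hB4 : B 4 = 204 := rfl
      rw [hB3, hB4, sigma_one_apply]
      decide
    · exact absurd hp (by norm_num)
  · have h2 := sigma_B_prime_le hp hp5
    have hBp : 1 ≤ B p := B_pos p (by omega)
    calc ArithmeticFunction.sigma 1 (B p) ≤ 2 * B p := h2
    _ < 5 * B p := by omega
    _ = 5^1 * B p := by ring
    _ ≤ B (p + 1) := B_shift_pow p 1 (by omega)

theorem stmt15 : ∀ n k : ℕ, 1 ≤ n → 1 ≤ k →
    ArithmeticFunction.sigma k (B n) ≤ B (ArithmeticFunction.sigma k n) ∧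
    (ArithmeticFunction.sigma k (B n) = B (ArithmeticFunction.sigma k n) → n = 1) := by
  intro n k hn hk
  rcases eq_or_lt_of_le hn with h1 | h1
  · -- n = 1
    have hn1 : n = 1 := h1.symm
    subst hn1
    have hB1 : B 1 = 1 := rfl
    have hσ1 : ArithmeticFunction.sigma k 1 = 1 := isMultiplicative_sigma.map_one
    rw [hB1, hσ1, hB1]
    exact ⟨le_refl 1, fun _ => rfl⟩
  · have hn2 : 2 ≤ n := h1
    have hstrict : ArithmeticFunction.sigma k (B n) < B (ArithmeticFunction.sigma k n) := by
      rcases eq_or_lt_of_le hk with hk1 | hk2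
      · -- k = 1
        rw [← hk1]
        by_cases hprime : n.Prime
        · exact case_prime hprime
        · exact case_composite hn2 hprime
      · exact case_k_ge_two hn2 hk2
    exact ⟨hstrict.le, fun h => absurd h hstrict.ne⟩
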